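/- Let (X,Y) have a differentiable joint density on ℝ² with finite J_XX, J_YY, J_XY satisfying J_XX + J_YY − 2J_XY > 0, and let W = X+Y have a differentiable density with finite Fisher information. Then J(X+Y) ≤ (J_XX J_YY − J_XY²) / (J_XX + J_YY − 2J_XY). -/

import Mathlib

open MeasureTheory Real

section Aux

open Filter Topology

/-- second-coordinate partial derivative -/
noncomputable def pd2 (q : ℝ × ℝ → ℝ) (z : ℝ × ℝ) : ℝ := deriv (fun y => q (z.1, y)) z.2

lemma shearMP : MeasurePreserving (fun z : ℝ × ℝ => (z.1, z.2 - z.1)) volume volume := by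
  rw [Measure.volume_eq_prod]
  exact measurePreserving_prod_sub volume volume

lemma shear_integrable {g : ℝ × ℝ → ℝ} (hg : Integrable g) :
    Integrable (fun z : ℝ × ℝ => g (z.1, z.2 - z.1)) :=
  (shearMP.integrable_comp hg.aestronglyMeasurable).mpr hg

lemma shear_slice {g : ℝ × ℝ → ℝ} (hg : Integrable g) :
    ∀ᵐ t : ℝ, Integrable (fun x => g (x, t - x)) := by
  have h := shear_integrable hg
  rw [Measure.volume_eq_prod] at h
  exact h.prod_left_ae

lemma shear_slice' {g : ℝ × ℝ → ℝ} (hg : Integrable g) :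
    ∀ᵐ x : ℝ, Integrable (fun t => g (x, t - x)) := by
  have h := shear_integrable hg
  rw [Measure.volume_eq_prod] at h
  exact h.prod_right_ae

lemma shear_marginal_integrable {g : ℝ × ℝ → ℝ} (hg : Integrable g) :
    Integrable (fun t => ∫ x, g (x, t - x)) := by
  have h := shear_integrable hg
  rw [Measure.volume_eq_prod] at h
  exact h.integral_prod_right

lemma shear_integral {g : ℝ × ℝ → ℝ} (hg : Integrable g) :
    ∫ t, (∫ x, g (x, t - x)) = ∫ z, g z := by
  have h := shear_integrable hg
  rw [Measure.volume_eq_prod] at h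
  have h1 : ∫ z : ℝ × ℝ, g (z.1, z.2 - z.1) = ∫ z, g z :=
    shearMP.integral_comp (MeasurableEquiv.shearSubRight ℝ).measurableEmbedding g
  rw [← h1, Measure.volume_eq_prod]
  exact (integral_integral_swap (f := fun x t => g (x, t - x)) h).symm.trans
    (integral_integral (f := fun x t => g (x, t - x)) h)

lemma measurable_pd2 {q : ℝ × ℝ → ℝ} (hm : Measurable q)
    (hd : ∀ x, Differentiable ℝ fun y => q (x, y)) : Measurable (pd2 q) := by
  have key : ∀ z : ℝ × ℝ, Tendsto (fun n : ℕ => (q (z.1, z.2 + ((n : ℝ) + 1)⁻¹) - q z) / ((n : ℝ) + 1)⁻¹)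
      atTop (𝓝 (pd2 q z)) := by
    intro z
    have hder : HasDerivAt (fun y => q (z.1, y)) (pd2 q z) z.2 := (hd z.1 z.2).hasDerivAt
    have hslope := hasDerivAt_iff_tendsto_slope.mp hder
    have hseq : Tendsto (fun n : ℕ => z.2 + ((n : ℝ) + 1)⁻¹) atTop (𝓝[≠] z.2) := by
      apply tendsto_nhdsWithin_of_tendsto_nhds_of_eventually_within
      · have : Tendsto (fun n : ℕ => ((n : ℝ) + 1)⁻¹) atTop (𝓝 0) :=
          tendsto_one_div_add_atTop_nhds_zero_nat.congr (by intro n; rw [one_div])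
        simpa using tendsto_const_nhds.add this
      · filter_upwards with n
        have : (0:ℝ) < ((n : ℝ) + 1)⁻¹ := by positivity
        simp only [Set.mem_compl_iff, Set.mem_singleton_iff]
        intro hh
        nlinarith [hh]
    have := hslope.comp hseq
    refine this.congr fun n => ?_
    simp only [Function.comp_apply, slope_def_field, add_sub_cancel_left]
  apply measurable_of_tendsto_metrizable (f := fun n z =>
    (q (z.1, z.2 + ((n : ℝ) + 1)⁻¹) - q z) / ((n : ℝ) + 1)⁻¹)
  · intro n
    exact ((hm.comp (measurable_fst.prodMk (measurable_snd.add_const _))).sub hm).div_const _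
  · exact tendsto_pi_nhds.mpr key

lemma ae_eq_of_intervalIntegral_eq {f g : ℝ → ℝ} (hf : Integrable f) (hg : Integrable g)
    (h : ∀ u v : ℝ, u ≤ v → ∫ t in u..v, f t = ∫ t in u..v, g t) :
    f =ᵐ[volume] g := by
  set h0 : ℝ → ℝ := fun t => f t - g t with hh0
  have hint : Integrable h0 := hf.sub hg
  have hI : ∀ u v : ℝ, u < v → ∫ t in Set.Ioc u v, h0 t = 0 := by
    intro u v huv
    have h1 : ∫ t in Set.Ioc u v, h0 t = ∫ t in u..v, h0 t := by
      rw [intervalIntegral.integral_of_le huv.le]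
    rw [h1]
    have := h u v huv.le
    rw [intervalIntegral.integral_sub hf.intervalIntegrable hg.intervalIntegrable]
    rw [this]; ring
  set μp := volume.withDensity (fun t => ENNReal.ofReal (h0 t)) with hμp
  set μm := volume.withDensity (fun t => ENNReal.ofReal (-h0 t)) with hμm
  have hfin_p : IsFiniteMeasure μp := isFiniteMeasure_withDensity_ofReal hint.hasFiniteIntegral
  have hfin_m : IsFiniteMeasure μm := isFiniteMeasure_withDensity_ofReal hint.neg.hasFiniteIntegral
  have ham : AEMeasurable h0 volume := hint.aemeasurable
  have hkey : μp = μm := by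
    refine Measure.ext_of_Ioc μp μm ?_
    intro u v huv
    have hres : Integrable h0 (volume.restrict (Set.Ioc u v)) := hint.restrict
    have := MeasureTheory.integral_eq_lintegral_pos_part_sub_lintegral_neg_part hres
    rw [hI u v huv] at this
    have hp_lt : (∫⁻ t in Set.Ioc u v, ENNReal.ofReal (h0 t)) < ⊤ := by
      refine lt_of_le_of_lt ?_ hint.hasFiniteIntegral
      refine le_trans (setLIntegral_le_lintegral _ _) (lintegral_mono fun t => ?_)
      rw [Real.enorm_eq_ofReal_abs]
      exact ENNReal.ofReal_le_ofReal (le_abs_self _)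
    have hm_lt : (∫⁻ t in Set.Ioc u v, ENNReal.ofReal (-h0 t)) < ⊤ := by
      refine lt_of_le_of_lt ?_ hint.neg.hasFiniteIntegral
      refine le_trans (setLIntegral_le_lintegral _ _) (lintegral_mono fun t => ?_)
      simp only [Pi.neg_apply, abs_neg]
      rw [Real.enorm_eq_ofReal_abs]
      simp only [Pi.neg_apply, abs_neg]
      exact ENNReal.ofReal_le_ofReal (neg_le_abs _)
    have heq : (∫⁻ t in Set.Ioc u v, ENNReal.ofReal (h0 t)).toReal
        = (∫⁻ t in Set.Ioc u v, ENNReal.ofReal (-h0 t)).toReal := by linarith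
    have : (∫⁻ t in Set.Ioc u v, ENNReal.ofReal (h0 t))
        = ∫⁻ t in Set.Ioc u v, ENNReal.ofReal (-h0 t) :=
      (ENNReal.toReal_eq_toReal_iff' hp_lt.ne hm_lt.ne).mp heq
    rw [hμp, hμm, withDensity_apply _ measurableSet_Ioc, withDensity_apply _ measurableSet_Ioc]
    exact this
  have := (withDensity_eq_iff (ENNReal.measurable_ofReal.comp_aemeasurable ham)
      (ENNReal.measurable_ofReal.comp_aemeasurable ham.neg) ?_).mp hkey
  · filter_upwards [this] with t ht
    have : h0 t = 0 := by
      by_contra hne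
      rcases lt_or_gt_of_ne hne with hlt | hgt
      · have h1 : ENNReal.ofReal (h0 t) = 0 := by simp [ENNReal.ofReal_eq_zero, hlt.le]
        have h2 : ENNReal.ofReal (-h0 t) > 0 := by
          simp only [Function.comp_apply] at ht ⊢
          exact ENNReal.ofReal_pos.mpr (by linarith)
        simp only [Function.comp_apply] at ht
        rw [h1] at ht; exact (ht ▸ h2).false
      · have h1 : ENNReal.ofReal (-h0 t) = 0 := by simp [ENNReal.ofReal_eq_zero]; linarith
        have h2 : ENNReal.ofReal (h0 t) > 0 := ENNReal.ofReal_pos.mpr hgt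
        simp only [Function.comp_apply, Pi.neg_apply] at ht
        rw [h1] at ht; exact (ht ▸ h2).false
    have : f t - g t = 0 := this
    linarith
  · refine ne_of_lt (lt_of_le_of_lt ?_ hint.hasFiniteIntegral)
    refine lintegral_mono fun t => ?_
    rw [Real.enorm_eq_ofReal_abs]
    exact ENNReal.ofReal_le_ofReal (le_abs_self _)

lemma primitive {q : ℝ × ℝ → ℝ} (hint : Integrable q)
    (hdiff : ∀ x, Differentiable ℝ fun y => q (x, y)) (hD : Integrable (pd2 q)) :
    ∃ c : ℝ, ∀ᵐ b : ℝ, (∫ x, q (x, b - x))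
      = c + ∫ t in (0:ℝ)..b, (∫ x, pd2 q (x, t - x)) := by
  set S : ℝ → ℝ := fun w => ∫ x, q (x, w - x) with hS
  set F : ℝ → ℝ := fun t => ∫ x, pd2 q (x, t - x) with hF
  have hFint : Integrable F := shear_marginal_integrable hD
  have hFTC : ∀ᵐ x : ℝ, ∀ u v : ℝ, q (x, v - x) - q (x, u - x)
      = ∫ t in u..v, pd2 q (x, t - x) := by
    filter_upwards [shear_slice' hD] with x hx
    intro u v
    refine (intervalIntegral.integral_eq_sub_of_hasDerivAt
      (f := fun t => q (x, t - x)) (f' := fun t => pd2 q (x, t - x)) (fun t _ => ?_)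
      hx.intervalIntegrable).symm
    have h1 : HasDerivAt (fun y => q (x, y)) (pd2 q (x, t - x)) (t - x) :=
      (hdiff x (t - x)).hasDerivAt
    have h2 : HasDerivAt (fun t : ℝ => t - x) 1 t := (hasDerivAt_id t).sub_const x
    have := HasDerivAt.comp t h1 h2
    rw [mul_one] at this
    exact this
  have key : ∀ u v : ℝ, u ≤ v → Integrable (fun x => q (x, u - x)) →
      Integrable (fun x => q (x, v - x)) → S v - S u = ∫ t in u..v, F t := by
    intro u v huv hu hv
    have h1 : S v - S u = ∫ x, (q (x, v - x) - q (x, u - x)) := (integral_sub hv hu).symm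
    have h2 : ∫ x, (q (x, v - x) - q (x, u - x))
        = ∫ x, (∫ t in Set.Ioc u v, pd2 q (x, t - x)) := by
      refine integral_congr_ae ?_
      filter_upwards [hFTC] with x hx
      rw [hx u v, intervalIntegral.integral_of_le huv]
    have hD2prod : Integrable (fun z : ℝ × ℝ => pd2 q (z.1, z.2 - z.1))
        ((volume : Measure ℝ).prod ((volume : Measure ℝ).restrict (Set.Ioc u v))) := by
      have h := shear_integrable hD
      rw [Measure.volume_eq_prod] at h
      have : (volume : Measure ℝ).prod ((volume : Measure ℝ).restrict (Set.Ioc u v))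
          = ((volume : Measure ℝ).prod (volume : Measure ℝ)).restrict
            (Set.univ ×ˢ Set.Ioc u v) := by
        rw [← Measure.prod_restrict, Measure.restrict_univ]
      rw [this]
      exact h.restrict
    have h3 : ∫ x, (∫ t in Set.Ioc u v, pd2 q (x, t - x))
        = ∫ t in Set.Ioc u v, (∫ x, pd2 q (x, t - x)) :=
      integral_integral_swap (f := fun x t => pd2 q (x, t - x)) hD2prod
    rw [h1, h2, h3, intervalIntegral.integral_of_le huv]
  have hane : (ae (volume : Measure ℝ)).NeBot := by
    refine ae_neBot.mpr ?_
    intro h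
    have : (volume : Measure ℝ) (Set.Icc 0 1) = 1 := by simp
    rw [h] at this
    simp at this
  obtain ⟨u₀, hu₀⟩ := (shear_slice hint).exists
  refine ⟨S u₀ + ∫ t in u₀..(0:ℝ), F t, ?_⟩
  filter_upwards [shear_slice hint] with v hv
  have hchasles : (∫ t in u₀..(0:ℝ), F t) + ∫ t in (0:ℝ)..v, F t = ∫ t in u₀..v, F t :=
    intervalIntegral.integral_add_adjacent_intervals hFint.intervalIntegrable
      hFint.intervalIntegrable
  have hmain : S v = S u₀ + ∫ t in u₀..v, F t := by
    rcases le_total u₀ v with hle | hle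
    · have := key u₀ v hle hu₀ hv
      linarith
    · have := key v u₀ hle hv hu₀
      rw [intervalIntegral.integral_symm]
      linarith
  show S v = (S u₀ + ∫ t in u₀..(0:ℝ), F t) + ∫ t in (0:ℝ)..v, F t
  rw [hmain, ← hchasles]
  ring

lemma aux_mul_div {a b : ℝ} (h : a = 0 → b = 0) : a * (b / a) = b := by
  rcases eq_or_ne a 0 with h0 | h0
  · simp [h0, h h0]
  · field_simp

lemma aux_abs_le {a b : ℝ} (ha : 0 ≤ a) (h : a = 0 → b = 0) :
    |b| ≤ (a + a * (b / a) ^ 2) / 2 := by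
  rcases eq_or_ne a 0 with h0 | h0
  · simp [h0, h h0]
  · have hapos : 0 < a := lt_of_le_of_ne ha (Ne.symm h0)
    have : a * (b / a) ^ 2 = b ^ 2 / a := by field_simp
    rw [this]
    rw [abs_le]
    have hb2 : b ^ 2 / a * a = b ^ 2 := by field_simp
    constructor
    · nlinarith [sq_nonneg (b + a), div_nonneg (sq_nonneg b) ha]
    · nlinarith [sq_nonneg (b - a), div_nonneg (sq_nonneg b) ha]

end Aux

/-- `ρ⁽¹⁾(x,y) = (∂p/∂x)(x,y) / p(x,y)`. -/
noncomputable def score1 (p : ℝ × ℝ → ℝ) (z : ℝ × ℝ) : ℝ :=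
  deriv (fun x => p (x, z.2)) z.1 / p z

/-- `ρ⁽²⁾(x,y) = (∂p/∂y)(x,y) / p(x,y)`. -/
noncomputable def score2 (p : ℝ × ℝ → ℝ) (z : ℝ × ℝ) : ℝ :=
  deriv (fun y => p (z.1, y)) z.2 / p z

/-- `J_XX = E[ρ⁽¹⁾(X,Y)²]`. -/
noncomputable def Jxx (p : ℝ × ℝ → ℝ) : ℝ := ∫ z, p z * (score1 p z) ^ 2

/-- `J_YY = E[ρ⁽²⁾(X,Y)²]`. -/
noncomputable def Jyy (p : ℝ × ℝ → ℝ) : ℝ := ∫ z, p z * (score2 p z) ^ 2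

/-- `J_XY = E[ρ⁽¹⁾(X,Y) ρ⁽²⁾(X,Y)]`. -/
noncomputable def Jxy (p : ℝ × ℝ → ℝ) : ℝ := ∫ z, p z * (score1 p z * score2 p z)

/-- Density of `W = X + Y`: `p_W(w) = ∫ p(x, w-x) dx`. -/
noncomputable def sumDensity (p : ℝ × ℝ → ℝ) (w : ℝ) : ℝ := ∫ x, p (x, w - x)

/-- Score of the sum: `ρ_W = p_W'/p_W`. -/
noncomputable def scoreW (p : ℝ × ℝ → ℝ) (w : ℝ) : ℝ :=
  deriv (sumDensity p) w / sumDensity p w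

/-- `J(X+Y) = E[ρ_W(W)²]`. -/
noncomputable def Jsum (p : ℝ × ℝ → ℝ) : ℝ := ∫ w, sumDensity p w * (scoreW p w) ^ 2

/-- `p` is a joint probability density on `ℝ²`. -/
def IsJointDensity (p : ℝ × ℝ → ℝ) : Prop :=
  Measurable p ∧ (∀ z, 0 ≤ p z) ∧ (∫ z, p z) = 1

/-- For `(X,Y)` with a differentiable joint density with finite `J_XX`, `J_YY`, `J_XY`
satisfying `J_XX + J_YY − 2 J_XY > 0`, whose sum `W = X+Y` has a differentiable density
with finite Fisher information,
`J(X+Y) ≤ (J_XX J_YY − J_XY²) / (J_XX + J_YY − 2 J_XY)`. -/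
theorem fisher_info_sum_le
    (p : ℝ × ℝ → ℝ) (hp : IsJointDensity p)
    (hd1 : ∀ y, Differentiable ℝ (fun x => p (x, y)))
    (hd2 : ∀ x, Differentiable ℝ (fun y => p (x, y)))
    (hJxx : Integrable (fun z => p z * (score1 p z) ^ 2))
    (hJyy : Integrable (fun z => p z * (score2 p z) ^ 2))
    (hJxy : Integrable (fun z => p z * (score1 p z * score2 p z)))
    (hpos : 0 < Jxx p + Jyy p - 2 * Jxy p)
    (hdW : Differentiable ℝ (sumDensity p))
    (hJW : Integrable (fun w => sumDensity p w * (scoreW p w) ^ 2)) :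
    Jsum p ≤ (Jxx p * Jyy p - (Jxy p) ^ 2) / (Jxx p + Jyy p - 2 * Jxy p) := by
  obtain ⟨hm, h0, hsum1⟩ := hp
  have hpInt : Integrable p := by
    by_contra h
    rw [integral_undef h] at hsum1
    norm_num at hsum1
  -- partial derivatives
  set ps : ℝ × ℝ → ℝ := fun z => p (z.2, z.1) with hpsdef
  have hdiff_ps : ∀ u, Differentiable ℝ fun y => ps (u, y) := fun u => hd1 u
  set d1 : ℝ × ℝ → ℝ := fun z => pd2 ps (z.2, z.1) with hd1def
  set d2 : ℝ × ℝ → ℝ := pd2 p with hd2def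
  have hs1 : ∀ z, score1 p z = d1 z / p z := fun z => rfl
  have hs2 : ∀ z, score2 p z = d2 z / p z := fun z => rfl
  have hmps : Measurable ps := hm.comp measurable_swap
  have hm1 : Measurable d1 := (measurable_pd2 hmps hdiff_ps).comp measurable_swap
  have hm2 : Measurable d2 := measurable_pd2 hm hd2
  -- vanishing of derivatives at zeros of p
  have hz2 : ∀ z, p z = 0 → d2 z = 0 := by
    intro z hz
    have hmin : IsLocalMin (fun y => p (z.1, y)) z.2 :=
      Filter.Eventually.of_forall fun y => by
        show p (z.1, z.2) ≤ p (z.1, y)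
        calc p (z.1, z.2) = 0 := hz
          _ ≤ p (z.1, y) := h0 _
    exact hmin.deriv_eq_zero
  have hz1 : ∀ z, p z = 0 → d1 z = 0 := by
    intro z hz
    have hmin : IsLocalMin (fun x => p (x, z.2)) z.1 :=
      Filter.Eventually.of_forall fun x => by
        show p (z.1, z.2) ≤ p (x, z.2)
        calc p (z.1, z.2) = 0 := hz
          _ ≤ p (x, z.2) := h0 _
    exact hmin.deriv_eq_zero
  -- integrability of the partial derivatives
  have hd2Int : Integrable d2 := by
    refine Integrable.mono' ((hpInt.add hJyy).div_const 2) hm2.aestronglyMeasurable ?_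
    filter_upwards with z
    have := aux_abs_le (h0 z) (hz2 z)
    simpa [Real.norm_eq_abs, hs2 z] using this
  have hd1Int : Integrable d1 := by
    refine Integrable.mono' ((hpInt.add hJxx).div_const 2) hm1.aestronglyMeasurable ?_
    filter_upwards with z
    have := aux_abs_le (h0 z) (hz1 z)
    simpa [Real.norm_eq_abs, hs1 z] using this
  -- the two primitives
  obtain ⟨c2, hc2⟩ := primitive hpInt hd2 hd2Int
  have swapMP : MeasurePreserving (Prod.swap : ℝ × ℝ → ℝ × ℝ) volume volume := by
    rw [Measure.volume_eq_prod]
    exact Measure.measurePreserving_swap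
  have hpsInt : Integrable ps := (swapMP.integrable_comp hpInt.aestronglyMeasurable).mpr hpInt
  have hd1psInt : Integrable (pd2 ps) :=
    (swapMP.integrable_comp hd1Int.aestronglyMeasurable).mpr hd1Int
  obtain ⟨c1, hc1⟩ := primitive hpsInt hdiff_ps hd1psInt
  set F2 : ℝ → ℝ := fun t => ∫ x, d2 (x, t - x) with hF2def
  set F1 : ℝ → ℝ := fun t => ∫ x, d1 (x, t - x) with hF1def
  have hF2int : Integrable F2 := shear_marginal_integrable hd2Int
  have hF1int : Integrable F1 := shear_marginal_integrable hd1Int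
  -- rewrite the ps-primitive in terms of sumDensity and F1
  have hSps : ∀ b : ℝ, (∫ x, ps (x, b - x)) = sumDensity p b := by
    intro b
    have h1 : (fun x => ps (x, b - x)) = fun x => (fun u => p (u, b - u)) (b - x) := by
      funext x
      simp [hpsdef, sub_sub_cancel]
    rw [h1, integral_sub_left_eq_self (fun u => p (u, b - u)) volume b]
    rfl
  have hF1' : ∀ t : ℝ, (∫ x, pd2 ps (x, t - x)) = F1 t := by
    intro t
    have h1 : (fun x => pd2 ps (x, t - x)) = fun x => (fun u => d1 (u, t - u)) (t - x) := by
      funext x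
      simp only [hd1def, sub_sub_cancel]
    rw [h1, integral_sub_left_eq_self (fun u => d1 (u, t - u)) volume t]
  -- global identities via continuity
  set S : ℝ → ℝ := sumDensity p with hSdef
  have hScont : Continuous S := hdW.continuous
  have hglobal2 : ∀ b, S b = c2 + ∫ t in (0:ℝ)..b, F2 t := by
    have hae : S =ᵐ[volume] fun b => c2 + ∫ t in (0:ℝ)..b, F2 t := hc2
    have := (Continuous.ae_eq_iff_eq volume hScont
      (continuous_const.add (hF2int.continuous_primitive 0))).mp hae
    exact fun b => congrFun this b
  have hglobal1 : ∀ b, S b = c1 + ∫ t in (0:ℝ)..b, F1 t := by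
    have hae : S =ᵐ[volume] fun b => c1 + ∫ t in (0:ℝ)..b, F1 t := by
      filter_upwards [hc1] with b hb
      rw [← hSps b, hb]
      congr 1
      exact intervalIntegral.integral_congr fun t _ => hF1' t
    have := (Continuous.ae_eq_iff_eq volume hScont
      (continuous_const.add (hF1int.continuous_primitive 0))).mp hae
    exact fun b => congrFun this b
  -- properties of S
  have hS0 : ∀ w, 0 ≤ S w := fun w => integral_nonneg fun x => h0 _
  have hSzero : ∀ w, S w = 0 → deriv S w = 0 := by
    intro w hw
    have hmin : IsLocalMin S w := Filter.Eventually.of_forall fun y => by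
      rw [hw]; exact hS0 y
    exact hmin.deriv_eq_zero
  have hSint : Integrable S := shear_marginal_integrable hpInt
  have hscoreW : ∀ w, scoreW p w = deriv S w / S w := fun w => rfl
  have hS'int : Integrable (deriv S) := by
    refine Integrable.mono' ((hSint.add hJW).div_const 2)
      (measurable_deriv S).aestronglyMeasurable ?_
    filter_upwards with w
    have := aux_abs_le (hS0 w) (hSzero w)
    simpa [Real.norm_eq_abs, hscoreW w] using this
  have hFTCS : ∀ u v : ℝ, (∫ t in u..v, deriv S t) = S v - S u := fun u v =>
    intervalIntegral.integral_eq_sub_of_hasDerivAt (fun t _ => (hdW t).hasDerivAt)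
      hS'int.intervalIntegrable
  -- identify deriv S with F1 and F2 a.e.
  have hintsub : ∀ (F : ℝ → ℝ), Integrable F → (∀ b, S b = (S 0) + ∫ t in (0:ℝ)..b, F t) →
      deriv S =ᵐ[volume] F := by
    intro F hFi hb
    refine ae_eq_of_intervalIntegral_eq hS'int hFi fun u v huv => ?_
    rw [hFTCS u v, hb u, hb v]
    have hch : (∫ t in (0:ℝ)..u, F t) + ∫ t in u..v, F t = ∫ t in (0:ℝ)..v, F t :=
      intervalIntegral.integral_add_adjacent_intervals hFi.intervalIntegrable
        hFi.intervalIntegrable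
    linarith
  have hc2' : ∀ b, S b = S 0 + ∫ t in (0:ℝ)..b, F2 t := by
    intro b
    have h00 := hglobal2 0
    simp only [intervalIntegral.integral_same] at h00
    rw [hglobal2 b, h00]; ring
  have hc1' : ∀ b, S b = S 0 + ∫ t in (0:ℝ)..b, F1 t := by
    intro b
    have h00 := hglobal1 0
    simp only [intervalIntegral.integral_same] at h00
    rw [hglobal1 b, h00]; ring
  have hae2 : deriv S =ᵐ[volume] F2 := hintsub F2 hF2int hc2'
  have hae1 : deriv S =ᵐ[volume] F1 := hintsub F1 hF1int hc1'
  -- optimal coefficients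
  obtain ⟨l, hldef⟩ : ∃ l : ℝ, l = (Jyy p - Jxy p) / (Jxx p + Jyy p - 2 * Jxy p) := ⟨_, rfl⟩
  obtain ⟨mm, hmmdef⟩ : ∃ m : ℝ, m = (Jxx p - Jxy p) / (Jxx p + Jyy p - 2 * Jxy p) := ⟨_, rfl⟩
  have hDne : Jxx p + Jyy p - 2 * Jxy p ≠ 0 := ne_of_gt hpos
  have hlm : l + mm = 1 := by
    rw [hldef, hmmdef, ← add_div, div_eq_one_iff_eq hDne]
    ring
  obtain ⟨s, hsdef⟩ : ∃ s : ℝ × ℝ → ℝ, s = fun z => l * score1 p z + mm * score2 p z := ⟨_, rfl⟩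
  have hsz : ∀ z, s z = l * score1 p z + mm * score2 p z := fun z => by rw [hsdef]
  -- integrabilities involving s
  have hps2int : Integrable (fun z => p z * s z ^ 2) := by
    have i1 : Integrable (fun z => l ^ 2 * (p z * score1 p z ^ 2)) := hJxx.const_mul _
    have i2 : Integrable (fun z => 2 * l * mm * (p z * (score1 p z * score2 p z))) :=
      hJxy.const_mul _
    have i3 : Integrable (fun z => mm ^ 2 * (p z * score2 p z ^ 2)) := hJyy.const_mul _
    have i12 : Integrable (fun z => l ^ 2 * (p z * score1 p z ^ 2)
        + 2 * l * mm * (p z * (score1 p z * score2 p z))) := i1.add i2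
    have i123 : Integrable (fun z => (l ^ 2 * (p z * score1 p z ^ 2)
        + 2 * l * mm * (p z * (score1 p z * score2 p z)))
        + mm ^ 2 * (p z * score2 p z ^ 2)) := i12.add i3
    refine i123.congr (Filter.Eventually.of_forall fun z => ?_)
    simp only [hsz]
    ring
  obtain ⟨g, hgdef⟩ : ∃ g : ℝ × ℝ → ℝ, g = fun z => l * d1 z + mm * d2 z := ⟨_, rfl⟩
  have hgz : ∀ z, g z = l * d1 z + mm * d2 z := fun z => by rw [hgdef]
  have hgInt : Integrable g := by
    have : Integrable (fun z => l * d1 z + mm * d2 z) :=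
      (hd1Int.const_mul l).add (hd2Int.const_mul mm)
    exact hgdef ▸ this
  have hgs : ∀ z, g z = p z * s z := by
    intro z
    have e1 : p z * score1 p z = d1 z := by rw [hs1 z]; exact aux_mul_div (hz1 z)
    have e2 : p z * score2 p z = d2 z := by rw [hs2 z]; exact aux_mul_div (hz2 z)
    calc g z = l * d1 z + mm * d2 z := hgz z
      _ = l * (p z * score1 p z) + mm * (p z * score2 p z) := by rw [e1, e2]
      _ = p z * s z := by rw [hsz z]; ring
  -- a.e. identity for deriv S as integral of p * s on slices
  have hderivF : ∀ᵐ t : ℝ, deriv S t = ∫ x, p (x, t - x) * s (x, t - x) := by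
    filter_upwards [hae1, hae2, shear_slice hd1Int, shear_slice hd2Int] with t h1 h2 hs1t hs2t
    have hgt : ∫ x, g (x, t - x) = l * F1 t + mm * F2 t := by
      have e : (fun x => g (x, t - x)) = fun x => l * d1 (x, t - x) + mm * d2 (x, t - x) := by
        funext x
        rw [hgz]
      rw [e, integral_add (hs1t.const_mul l) (hs2t.const_mul mm),
        integral_const_mul, integral_const_mul]
    have : ∫ x, g (x, t - x) = ∫ x, p (x, t - x) * s (x, t - x) :=
      integral_congr_ae (Filter.Eventually.of_forall fun x => hgs (x, t - x))
    rw [← this, hgt, ← h1, ← h2, ← add_mul, hlm, one_mul]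
  -- pointwise Cauchy-Schwarz bound a.e.
  have hbound : ∀ᵐ t : ℝ, S t * (scoreW p t) ^ 2 ≤ ∫ x, p (x, t - x) * s (x, t - x) ^ 2 := by
    filter_upwards [hderivF, shear_slice hpInt, shear_slice hps2int, shear_slice hgInt]
      with t hdF hIt hAt hgt
    have hBt : Integrable (fun x => p (x, t - x) * s (x, t - x)) :=
      hgt.congr (Filter.Eventually.of_forall fun x => hgs (x, t - x))
    have hAnn : 0 ≤ ∫ x, p (x, t - x) * s (x, t - x) ^ 2 :=
      integral_nonneg fun x => mul_nonneg (h0 _) (sq_nonneg _)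
    rcases eq_or_lt_of_le (hS0 t) with hP | hP
    · have : scoreW p t = 0 := by
        rw [hscoreW t, ← hP, div_zero]
      rw [this, ← hP]
      simpa using hAnn
    · set P : ℝ := S t with hPdef
      set B : ℝ := deriv S t with hBdef
      set A : ℝ := ∫ x, p (x, t - x) * s (x, t - x) ^ 2 with hAdef
      have hPS : P = ∫ x, p (x, t - x) := rfl
      set r : ℝ := B / P with hrdef
      have hnn : 0 ≤ ∫ x, p (x, t - x) * (s (x, t - x) - r) ^ 2 :=
        integral_nonneg fun x => mul_nonneg (h0 _) (sq_nonneg _)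
      have hexp : ∫ x, p (x, t - x) * (s (x, t - x) - r) ^ 2
          = A - 2 * r * B + r ^ 2 * P := by
        have hfun : (fun x => p (x, t - x) * (s (x, t - x) - r) ^ 2)
            = fun x => (p (x, t - x) * s (x, t - x) ^ 2
                - (2 * r) * (p (x, t - x) * s (x, t - x))) + r ^ 2 * p (x, t - x) := by
          funext x
          ring
        have j1 : Integrable (fun x => p (x, t - x) * s (x, t - x) ^ 2
            - 2 * r * (p (x, t - x) * s (x, t - x))) := hAt.sub (hBt.const_mul (2 * r))
        have j2 : Integrable (fun x => r ^ 2 * p (x, t - x)) := hIt.const_mul (r ^ 2)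
        rw [hfun, integral_add j1 j2,
          integral_sub hAt (hBt.const_mul (2 * r)), integral_const_mul, integral_const_mul,
          ← hdF, ← hPS, ← hAdef]
      show P * (scoreW p t) ^ 2 ≤ A
      have hsc : scoreW p t = r := by rw [hscoreW t]
      rw [hsc]
      have hid : P * r ^ 2 = 2 * r * B - r ^ 2 * P := by
        rw [hrdef]
        field_simp
        ring
      linarith [hnn, hexp ▸ hnn]
  -- value of the quadratic form
  have hval : ∫ z, p z * s z ^ 2
      = l ^ 2 * Jxx p + 2 * l * mm * Jxy p + mm ^ 2 * Jyy p := by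
    have hfun : (fun z => p z * s z ^ 2)
        = fun z => (l ^ 2 * (p z * score1 p z ^ 2)
            + (2 * l * mm) * (p z * (score1 p z * score2 p z)))
            + mm ^ 2 * (p z * score2 p z ^ 2) := by
      funext z
      rw [hsz z]
      ring
    have i1 : Integrable (fun z => l ^ 2 * (p z * score1 p z ^ 2)) := hJxx.const_mul _
    have i2 : Integrable (fun z => 2 * l * mm * (p z * (score1 p z * score2 p z))) :=
      hJxy.const_mul _
    have i3 : Integrable (fun z => mm ^ 2 * (p z * score2 p z ^ 2)) := hJyy.const_mul _
    have i12 : Integrable (fun z => l ^ 2 * (p z * score1 p z ^ 2)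
        + 2 * l * mm * (p z * (score1 p z * score2 p z))) := i1.add i2
    rw [hfun, integral_add i12 i3, integral_add i1 i2,
      integral_const_mul, integral_const_mul, integral_const_mul]
    rfl
  -- final chain
  have hfinal : Jsum p ≤ l ^ 2 * Jxx p + 2 * l * mm * Jxy p + mm ^ 2 * Jyy p := by
    have h1 : Jsum p ≤ ∫ t, (∫ x, p (x, t - x) * s (x, t - x) ^ 2) := by
      have := integral_mono_ae hJW (shear_marginal_integrable hps2int) hbound
      exact this
    have h2 : ∫ t, (∫ x, p (x, t - x) * s (x, t - x) ^ 2) = ∫ z, p z * s z ^ 2 :=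
      shear_integral hps2int
    rw [h2, hval] at h1
    exact h1
  refine le_trans hfinal (le_of_eq ?_)
  rw [hldef, hmmdef]
  have hinv : (Jxx p + Jyy p - 2 * Jxy p) * (Jxx p + Jyy p - 2 * Jxy p)⁻¹ = 1 :=
    mul_inv_cancel₀ hDne
  linear_combination ((Jxx p * Jyy p - (Jxy p) ^ 2) * (Jxx p + Jyy p - 2 * Jxy p)⁻¹) * hinv
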